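/- Let H = (V, E) be a finite directed graph, let j ∈ ℕ, and let H_j = (V, E_j) be a subgraph of H (E_j ⊆ E) such that for every vertex v: if the out-degree of v in H is at most 2^j, then v has exactly the same out-edges in H_j as in H, and otherwise v has exactly 2^j out-edges in H_j. Let Bl_j = {v ∈ V : the out-degree of v in H exceeds 2^j}. Then: (1) a set C ⊆ V ∖ Bl_j is a bottom SCC of H_j if and only if it is a bottom SCC of H; and (2) every bottom SCC C of H with |C| ≤ 2^j satisfies C ⊆ V ∖ Bl_j. -/

import Mathlib

/-- The subgraph induced on `X` is strongly connected. -/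
def SCOn {V : Type*} (E : V → V → Prop) (X : Set V) : Prop :=
  ∀ u ∈ X, ∀ v ∈ X, Relation.ReflTransGen (fun a b => a ∈ X ∧ b ∈ X ∧ E a b) u v

/-- `C` is a strongly connected component of the graph with edge relation `E`:
a maximal (nonempty) strongly connected set of vertices. -/
def IsSCC {V : Type*} (E : V → V → Prop) (C : Set V) : Prop :=
  C.Nonempty ∧ SCOn E C ∧ ∀ D, C ⊆ D → SCOn E D → D = C

/-- A bottom SCC: an SCC with no edge leaving it. -/
def IsBottomSCC {V : Type*} (E : V → V → Prop) (C : Set V) : Prop :=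
  IsSCC E C ∧ ∀ a ∈ C, ∀ b, E a b → b ∈ C

lemma bottom_of_closed {V : Type*} (E : V → V → Prop) (C : Set V)
    (hne : C.Nonempty) (hsc : SCOn E C)
    (hcl : ∀ a ∈ C, ∀ b, E a b → b ∈ C) : IsBottomSCC E C := by
  refine ⟨⟨hne, hsc, ?_⟩, hcl⟩
  intro D hCD hD
  obtain ⟨c, hc⟩ := hne
  apply Set.Subset.antisymm _ hCD
  intro d hd
  have hpath := hD c (hCD hc) d hd
  induction hpath with
  | refl => exact hc
  | tail _ hstep ih => exact hcl _ (ih hstep.1) _ hstep.2.2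

theorem stmt6' {V : Type*} [Fintype V] (E Ej : V → V → Prop) (j : ℕ)
    (hsub : ∀ a b : V, Ej a b → E a b)
    (hsmall : ∀ v : V, {w | E v w}.ncard ≤ 2 ^ j → ∀ w, Ej v w ↔ E v w)
    (hbig : ∀ v : V, 2 ^ j < {w | E v w}.ncard → {w | Ej v w}.ncard = 2 ^ j) :
    (∀ C : Set V, (∀ v ∈ C, {w | E v w}.ncard ≤ 2 ^ j) →
      (IsBottomSCC Ej C ↔ IsBottomSCC E C)) ∧
    (∀ C : Set V, IsBottomSCC E C → C.ncard ≤ 2 ^ j →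
      ∀ v ∈ C, {w | E v w}.ncard ≤ 2 ^ j) := by
  constructor
  · intro C hdeg
    constructor
    · rintro ⟨⟨hne, hsc, -⟩, hcl⟩
      refine bottom_of_closed E C hne ?_ ?_
      · intro u hu v hv
        exact Relation.ReflTransGen.mono (fun a b ⟨ha, hb, hab⟩ => ⟨ha, hb, hsub a b hab⟩) u v (hsc u hu v hv)
      · intro a ha b hab
        exact hcl a ha b ((hsmall a (hdeg a ha) b).2 hab)
    · rintro ⟨⟨hne, hsc, -⟩, hcl⟩
      refine bottom_of_closed Ej C hne ?_ ?_
      · intro u hu v hv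
        exact Relation.ReflTransGen.mono (fun a b ⟨ha, hb, hab⟩ =>
          ⟨ha, hb, (hsmall a (hdeg a ha) b).2 hab⟩) u v (hsc u hu v hv)
      · intro a ha b hab
        exact hcl a ha b (hsub a b hab)
  · rintro C ⟨-, hcl⟩ hcard v hv
    calc {w | E v w}.ncard ≤ C.ncard :=
      Set.ncard_le_ncard (fun w hw => hcl v hv w hw) C.toFinite
    _ ≤ 2 ^ j := hcard

theorem stmt6 {V : Type*} [Fintype V] (E Ej : V → V → Prop) (j : ℕ)
    -- `H_j = (V, E_j)` is a subgraph of `H = (V, E)`: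
    (hsub : ∀ a b : V, Ej a b → E a b)
    -- vertices of out-degree at most `2^j` keep exactly their out-edges:
    (hsmall : ∀ v : V, {w | E v w}.ncard ≤ 2 ^ j → ∀ w, Ej v w ↔ E v w)
    -- other vertices keep exactly `2^j` out-edges:
    (hbig : ∀ v : V, 2 ^ j < {w | E v w}.ncard → {w | Ej v w}.ncard = 2 ^ j) :
    -- (1) for `C ⊆ V ∖ Bl_j`, bottom SCC of `H_j` iff bottom SCC of `H`:
    (∀ C : Set V, (∀ v ∈ C, {w | E v w}.ncard ≤ 2 ^ j) →
      (IsBottomSCC Ej C ↔ IsBottomSCC E C)) ∧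
    -- (2) every bottom SCC of `H` with at most `2^j` vertices avoids `Bl_j`:
    (∀ C : Set V, IsBottomSCC E C → C.ncard ≤ 2 ^ j →
      ∀ v ∈ C, {w | E v w}.ncard ≤ 2 ^ j) := by
  exact stmt6' E Ej j hsub hsmall hbig
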